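/- arXiv:1309.2886 — 5 statements merged into one kernel-verified Lean document; each statement's English description precedes it below -/
import Mathlib

section
/- Label the vertices of the complete graph K_7 by ZMod 7 and, for each j ∈ {1,2,3} and i ∈ ZMod 7, let e_{i,j} denote the oriented edge from vertex i to vertex i+j (so the edges with j = 1, 2, 3 form the oriented 0-star, 1-star and 2-star, respectively). For two edges with no common vertex define ε(a,b) = −1 if one of a,b has type 1 and the other has type 2, and ε(a,b) = 1 otherwise. Then for every oriented edge e = e_{a,j} and every vertex v ∈ ZMod 7 with v ∉ {a, a+j}, the sum of ε(e, e_{v,j'}) over all j' ∈ {1,2,3} for which the outgoing edge e_{v,j'} shares no vertex with e equals the sum of ε(e, e_{v−j',j'}) over all j' ∈ {1,2,3} for which the incoming edge e_{v−j',j'} shares no vertex with e. (This is the local balance identity which shows that the generalized Simon invariant of K_7, defined as Σ_{a∩b=∅} ε(a,b)ℓ(f(a),f(b)) over a projection of an embedding f, is invariant under the fifth Reidemeister move, equivalently that ε induces a homomorphism from the linking module L(K_7) to ℤ.) -/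
/-- The edge `e_{i,j}` of `K₇` joining vertex `i` to vertex `i + j`
(oriented from `i` to `i + j`), viewed as its set of endpoints. -/
def K7edge (i : ZMod 7) (j : ℕ) : Finset (ZMod 7) := {i, i + (j : ZMod 7)}

/-- The epsilon coefficient of a pair of disjoint edges of `K₇`, depending only on
their types `j, j' ∈ {1,2,3}`: it is `-1` if one is of type 1 and the other of type 2,
and `1` otherwise. -/
def K7eps (j j' : ℕ) : ℤ :=
  if (j = 1 ∧ j' = 2) ∨ (j = 2 ∧ j' = 1) then -1 else 1

/-- Local balance identity for `K₇`: for every oriented edge `e = e_{a,j}` and every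
vertex `v` not on `e`, the sum of the epsilon coefficients of `e` with the outgoing
edges at `v` disjoint from `e` equals the sum of the epsilon coefficients of `e` with
the incoming edges at `v` disjoint from `e`. -/
theorem K7_local_balance (a : ZMod 7) (j : ℕ) (hj : j ∈ ({1, 2, 3} : Finset ℕ))
    (v : ZMod 7) (hv₁ : v ≠ a) (hv₂ : v ≠ a + (j : ZMod 7)) :
    (∑ j' ∈ ({1, 2, 3} : Finset ℕ),
        if Disjoint (K7edge a j) (K7edge v j') then K7eps j j' else 0) =
    (∑ j' ∈ ({1, 2, 3} : Finset ℕ),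
        if Disjoint (K7edge a j) (K7edge (v - (j' : ZMod 7)) j') then K7eps j j' else 0) := by
  fin_cases hj <;> revert hv₁ hv₂ <;> revert a v <;> decide
end

section
/- For every odd natural number n (n ≥ 1), the binomial coefficient C(4n+3, 7) = (4n+3 choose 7), which counts the K_7 subgraphs of the complete graph K_{4n+3}, is an odd number. -/
/-- For every odd natural number `n ≥ 1`, the number `(4n+3).choose 7` of `K₇`
subgraphs of the complete graph `K_{4n+3}` is odd. -/
theorem choose_four_n_add_three_seven_odd (n : ℕ) (hn : 1 ≤ n) (hodd : Odd n) :
    Odd (Nat.choose (4 * n + 3) 7) := by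
  haveI : Fact (Nat.Prime 2) := ⟨by norm_num⟩
  obtain ⟨m, rfl⟩ := hodd
  have e : 4 * (2 * m + 1) + 3 = 8 * m + 7 := by ring
  rw [e]
  have h1 := Choose.choose_modEq_choose_mod_mul_choose_div_nat (p := 2) (n := 8 * m + 7) (k := 7)
  have h2 := Choose.choose_modEq_choose_mod_mul_choose_div_nat (p := 2) (n := 4 * m + 3) (k := 3)
  have e1 : (8 * m + 7) % 2 = 1 := by omega
  have e2 : (8 * m + 7) / 2 = 4 * m + 3 := by omega
  have e3 : (4 * m + 3) % 2 = 1 := by omega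
  have e4 : (4 * m + 3) / 2 = 2 * m + 1 := by omega
  rw [e1, e2] at h1
  rw [e3, e4] at h2
  norm_num at h1 h2
  have := h1.trans h2
  rw [Nat.odd_iff]
  simpa [Nat.ModEq, Nat.mul_mod, Nat.add_mod] using this
end

section
/- Fix an integer N ≥ 2 and model the Möbius ladder M_{2N+1} on the vertex set ZMod (4N+2), with outer edges X_i = {i, i+1} and rungs Y_i = {i, i+2N+1}. For every c ∈ ZMod (4N+2), the rotation ρ_c : i ↦ i + c and the reflection τ : i ↦ −i, acting on edges elementwise, map outer edges to outer edges and rungs to rungs, and preserve the epsilon coefficients: ε(ρ_c(a), ρ_c(b)) = ε(a,b) and ε(τ(a), τ(b)) = ε(a,b) for all pairs of disjoint edges a, b. (This is the verification that the generalized Simon invariant of M_{2N+1} is independent of the choice of labeling, since every automorphism of M_{2N+1} acts on the outer cycle as a rotation or reflection.) -/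
/-- An edge of the Möbius ladder `M_{2N+1}` on the vertex set `ZMod (4N+2)`:
either an outer edge `X_i = {i, i+1}` or a rung `Y_i = {i, i + 2N + 1}`. -/
inductive MLEdge (N : ℕ) where
  | outer (i : ZMod (4 * N + 2))
  | rung (i : ZMod (4 * N + 2))

/-- The set of endpoints of an edge of `M_{2N+1}`. -/
def MLEdge.verts {N : ℕ} : MLEdge N → Finset (ZMod (4 * N + 2))
  | .outer i => {i, i + 1}
  | .rung i => {i, i + (2 * N + 1 : ℕ)}

/-- The cyclic distance between vertices of the `(4N+2)`-cycle. -/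
def MLcdist {N : ℕ} (u w : ZMod (4 * N + 2)) : ℕ := min (u - w).val (w - u).val

/-- The minimal outer edge distance `d(a,b)` between two edges of `M_{2N+1}`. -/
def MLEdge.dist {N : ℕ} (a b : MLEdge N) : ℕ :=
  (((a.verts ×ˢ b.verts).image fun p => MLcdist p.1 p.2).min).untopD 0

/-- The epsilon coefficient of a pair of edges of `M_{2N+1}` (with value `0` when the
edges share a vertex). -/
def MLeps {N : ℕ} (a b : MLEdge N) : ℤ :=
  if ¬ Disjoint a.verts b.verts then 0 else
  match a, b with
  | .outer _, .outer _ =>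
      if Odd (a.dist b) ∧ a.dist b ≠ 2 * N - 1 then 2
      else if a.dist b = 2 * N then -1 else 1
  | .outer _, .rung _ => if a.dist b = 1 then 2 else 3
  | .rung _, .outer _ => if a.dist b = 1 then 2 else 3
  | .rung _, .rung _ =>
      if a.dist b = 1 then 2 else if a.dist b = 2 then 5 else 6

/-- The rotation `i ↦ i + c` of the `(4N+2)`-cycle, acting on the edges of `M_{2N+1}`:
it maps outer edges to outer edges and rungs to rungs. -/
def MLrot {N : ℕ} (c : ZMod (4 * N + 2)) : MLEdge N → MLEdge N
  | .outer i => .outer (i + c)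
  | .rung i => .rung (i + c)

/-- The reflection `i ↦ -i` of the `(4N+2)`-cycle, acting on the edges of `M_{2N+1}`:
it maps outer edges to outer edges and rungs to rungs. -/
def MLrefl {N : ℕ} : MLEdge N → MLEdge N
  | .outer i => .outer (-i - 1)
  | .rung i => .rung (-i - (2 * N + 1 : ℕ))

lemma MLcdist_add {N : ℕ} (u w c : ZMod (4 * N + 2)) :
    MLcdist (u + c) (w + c) = MLcdist u w := by
  simp [MLcdist, add_sub_add_right_eq_sub]

lemma MLcdist_neg {N : ℕ} (u w : ZMod (4 * N + 2)) :
    MLcdist (-u) (-w) = MLcdist u w := by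
  unfold MLcdist
  rw [neg_sub_neg, neg_sub_neg, Nat.min_comm]

lemma MLdist_map {N : ℕ} (f : ZMod (4 * N + 2) → ZMod (4 * N + 2))
    (hf : ∀ u w, MLcdist (f u) (f w) = MLcdist u w)
    (a b a' b' : MLEdge N) (ha : a'.verts = a.verts.image f)
    (hb : b'.verts = b.verts.image f) : a'.dist b' = a.dist b := by
  unfold MLEdge.dist
  rw [ha, hb]
  have hset : ((a.verts.image f) ×ˢ (b.verts.image f)).image (fun p => MLcdist p.1 p.2)
      = (a.verts ×ˢ b.verts).image fun p => MLcdist p.1 p.2 := by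
    ext n
    simp only [Finset.mem_image, Finset.mem_product]
    constructor
    · rintro ⟨⟨p, q⟩, ⟨⟨u, hu, rfl⟩, ⟨w, hw, rfl⟩⟩, rfl⟩
      exact ⟨(u, w), ⟨hu, hw⟩, (hf u w).symm⟩
    · rintro ⟨⟨u, w⟩, ⟨hu, hw⟩, rfl⟩
      exact ⟨(f u, f w), ⟨⟨u, hu, rfl⟩, ⟨w, hw, rfl⟩⟩, hf u w⟩
  rw [hset]

/-- For `N ≥ 2`, the rotations and the reflection of the outer cycle of `M_{2N+1}` act
on edges elementwise (mapping outer edges to outer edges and rungs to rungs) and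
preserve the epsilon coefficients of all pairs of disjoint edges.  Hence the
generalized Simon invariant of `M_{2N+1}` is independent of the labeling. -/
theorem MobiusLadder_eps_symmetry (N : ℕ) (hN : 2 ≤ N) (c : ZMod (4 * N + 2)) :
    (∀ e : MLEdge N, (MLrot c e).verts = e.verts.image (· + c)) ∧
    (∀ e : MLEdge N, (MLrefl e).verts = e.verts.image (fun i => -i)) ∧
    (∀ a b : MLEdge N, Disjoint a.verts b.verts →
      MLeps (MLrot c a) (MLrot c b) = MLeps a b) ∧
    (∀ a b : MLEdge N, Disjoint a.verts b.verts →
      MLeps (MLrefl a) (MLrefl b) = MLeps a b) := by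
  have h1 : ∀ e : MLEdge N, (MLrot c e).verts = e.verts.image (· + c) := by
    intro e; cases e <;> simp [MLrot, MLEdge.verts] <;> congr 1 <;> ring
  have h2 : ∀ e : MLEdge N, (MLrefl e).verts = e.verts.image (fun i => -i) := by
    intro e
    cases e with
    | outer i =>
        simp only [MLrefl, MLEdge.verts, Finset.image_insert, Finset.image_singleton]
        rw [Finset.pair_comm]
        congr 1 <;> ring
    | rung i =>
        simp only [MLrefl, MLEdge.verts, Finset.image_insert, Finset.image_singleton]
        rw [Finset.pair_comm]
        congr 1 <;> ring
  have hrotinj : Function.Injective (fun i : ZMod (4 * N + 2) => i + c) :=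
    fun x y h => by simpa using h
  have hneginj : Function.Injective (fun i : ZMod (4 * N + 2) => -i) := neg_injective
  refine ⟨h1, h2, ?_, ?_⟩
  · intro a b hd
    have hdist := MLdist_map (fun i => i + c) (fun u w => MLcdist_add u w c)
      a b _ _ (h1 a) (h1 b)
    have hd2 : Disjoint (MLrot c a).verts (MLrot c b).verts := by
      rw [h1, h1]; exact (Finset.disjoint_image hrotinj).2 hd
    cases a <;> cases b <;>
      simp only [MLrot] at hdist hd2 ⊢ <;>
      simp only [MLeps, hdist, if_neg (not_not_intro hd2), if_neg (not_not_intro hd)]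
  · intro a b hd
    have hdist := MLdist_map (fun i => -i) (fun u w => MLcdist_neg u w)
      a b _ _ (h2 a) (h2 b)
    have hd2 : Disjoint (MLrefl a).verts (MLrefl b).verts := by
      rw [h2, h2]; exact (Finset.disjoint_image hneginj).2 hd
    cases a <;> cases b <;>
      simp only [MLrefl] at hdist hd2 ⊢ <;>
      simp only [MLeps, hdist, if_neg (not_not_intro hd2), if_neg (not_not_intro hd)]
end

section
/- In the quotient module L(K_{3,3}) = Z(K_{3,3})/B(K_{3,3}), the classes of the generators satisfy [g1] = [g2] = [g3] = [g4] = [g5] = [g6] = [g7] = [g8] = [g9] = [g10] = [g12] = [g15] = [g16] = [g17] = [g18] and [g11] = [g13] = [g14] = −[g1]. -/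
namespace K33LinkingModule

/-- The generators `g₁, …, g₁₈` of the free ℤ-module `Z(K_{3,3})` (0-indexed):
`g q` is the `q`-th standard basis vector of `Fin 18 → ℤ`. -/
def g (q : Fin 18) : Fin 18 → ℤ := Pi.single q 1

/-- The 36 relators generating the submodule `B(K_{3,3}) ≤ Z(K_{3,3})`
(Taniyama's relations `δ(V^{e,v})` for `K_{3,3}`, written in the generators `g`,
0-indexed). -/
def relList : List (Fin 18 → ℤ) :=
  [g 9 - g 5, g 0 - g 8, g 6 - g 3,
   g 4 + g 10, g 12 + g 17, g 15 - g 14,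
   -g 13 - g 0, g 1 - g 6, g 7 - g 4,
   g 5 - g 14, -g 16 - g 12, g 9 - g 15,
   g 11 - g 1, g 2 - g 7, g 8 - g 5,
   g 0 + g 12, g 13 + g 16, g 17 - g 9,
   -g 10 - g 2, g 3 - g 8, g 6 - g 0,
   g 1 - g 9, -g 15 - g 13, g 11 - g 17,
   g 14 - g 3, g 4 - g 6, g 7 - g 1,
   g 2 + g 13, g 10 + g 15, g 16 - g 11,
   -g 12 - g 4, g 5 - g 7, g 8 - g 2,
   g 3 - g 11, -g 17 - g 10, g 14 - g 16]

/-- The submodule `B(K_{3,3})` of `Z(K_{3,3}) = (Fin 18 → ℤ)` spanned by the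
36 relators. -/
def B : Submodule ℤ (Fin 18 → ℤ) := Submodule.span ℤ {x | x ∈ relList}

/-- The linking module `L(K_{3,3}) = Z(K_{3,3}) / B(K_{3,3})`. -/
abbrev L := (Fin 18 → ℤ) ⧸ B

/-- In `L(K_{3,3})`, the classes of the generators satisfy
`[g₁] = ⋯ = [g₁₀] = [g₁₂] = [g₁₅] = [g₁₆] = [g₁₇] = [g₁₈]` and
`[g₁₁] = [g₁₃] = [g₁₄] = -[g₁]` (indices 1-based; here 0-indexed). -/
theorem classes_of_generators :
    (∀ q ∈ ({0, 1, 2, 3, 4, 5, 6, 7, 8, 9, 11, 14, 15, 16, 17} : Finset (Fin 18)),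
      (Submodule.Quotient.mk (g q) : L) = Submodule.Quotient.mk (g 0)) ∧
    (∀ q ∈ ({10, 12, 13} : Finset (Fin 18)),
      (Submodule.Quotient.mk (g q) : L) = -Submodule.Quotient.mk (g 0)) := by

  have h : ∀ r ∈ relList, (Submodule.Quotient.mk r : L) = 0 := fun r hr =>
    (Submodule.Quotient.mk_eq_zero B).mpr (Submodule.subset_span hr)
  have h20 : (Submodule.Quotient.mk (g 6) : L) = Submodule.Quotient.mk (g 0) := by
    have := h (g 6 - g 0) (by simp [relList]); rwa [Submodule.Quotient.mk_sub, sub_eq_zero] at this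
  have h7 : (Submodule.Quotient.mk (g 1) : L) = Submodule.Quotient.mk (g 6) := by
    have := h (g 1 - g 6) (by simp [relList]); rwa [Submodule.Quotient.mk_sub, sub_eq_zero] at this
  have h26 : (Submodule.Quotient.mk (g 7) : L) = Submodule.Quotient.mk (g 1) := by
    have := h (g 7 - g 1) (by simp [relList]); rwa [Submodule.Quotient.mk_sub, sub_eq_zero] at this
  have h13 : (Submodule.Quotient.mk (g 2) : L) = Submodule.Quotient.mk (g 7) := by
    have := h (g 2 - g 7) (by simp [relList]); rwa [Submodule.Quotient.mk_sub, sub_eq_zero] at this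
  have h32 : (Submodule.Quotient.mk (g 8) : L) = Submodule.Quotient.mk (g 2) := by
    have := h (g 8 - g 2) (by simp [relList]); rwa [Submodule.Quotient.mk_sub, sub_eq_zero] at this
  have h19 : (Submodule.Quotient.mk (g 3) : L) = Submodule.Quotient.mk (g 8) := by
    have := h (g 3 - g 8) (by simp [relList]); rwa [Submodule.Quotient.mk_sub, sub_eq_zero] at this
  have h25 : (Submodule.Quotient.mk (g 4) : L) = Submodule.Quotient.mk (g 6) := by
    have := h (g 4 - g 6) (by simp [relList]); rwa [Submodule.Quotient.mk_sub, sub_eq_zero] at this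
  have h31 : (Submodule.Quotient.mk (g 5) : L) = Submodule.Quotient.mk (g 7) := by
    have := h (g 5 - g 7) (by simp [relList]); rwa [Submodule.Quotient.mk_sub, sub_eq_zero] at this
  have h0 : (Submodule.Quotient.mk (g 9) : L) = Submodule.Quotient.mk (g 5) := by
    have := h (g 9 - g 5) (by simp [relList]); rwa [Submodule.Quotient.mk_sub, sub_eq_zero] at this
  have h24 : (Submodule.Quotient.mk (g 14) : L) = Submodule.Quotient.mk (g 3) := by
    have := h (g 14 - g 3) (by simp [relList]); rwa [Submodule.Quotient.mk_sub, sub_eq_zero] at this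
  have h11 : (Submodule.Quotient.mk (g 15) : L) = Submodule.Quotient.mk (g 9) := by
    have := h (g 9 - g 15) (by simp [relList])
    rw [Submodule.Quotient.mk_sub, sub_eq_zero] at this; exact this.symm
  have h17 : (Submodule.Quotient.mk (g 17) : L) = Submodule.Quotient.mk (g 9) := by
    have := h (g 17 - g 9) (by simp [relList]); rwa [Submodule.Quotient.mk_sub, sub_eq_zero] at this
  have h12 : (Submodule.Quotient.mk (g 11) : L) = Submodule.Quotient.mk (g 1) := by
    have := h (g 11 - g 1) (by simp [relList]); rwa [Submodule.Quotient.mk_sub, sub_eq_zero] at this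
  have h29 : (Submodule.Quotient.mk (g 16) : L) = Submodule.Quotient.mk (g 11) := by
    have := h (g 16 - g 11) (by simp [relList]); rwa [Submodule.Quotient.mk_sub, sub_eq_zero] at this
  have h15 : (Submodule.Quotient.mk (g 12) : L) = -Submodule.Quotient.mk (g 0) := by
    have := h (g 0 + g 12) (by simp [relList])
    rw [Submodule.Quotient.mk_add] at this
    exact eq_neg_of_add_eq_zero_right this
  have h6 : (Submodule.Quotient.mk (g 13) : L) = -Submodule.Quotient.mk (g 0) := by
    have := h (-g 13 - g 0) (by simp [relList])
    rw [Submodule.Quotient.mk_sub, Submodule.Quotient.mk_neg, sub_eq_zero] at this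
    exact neg_eq_iff_eq_neg.mp this
  have h3 : (Submodule.Quotient.mk (g 10) : L) = -Submodule.Quotient.mk (g 4) := by
    have := h (g 4 + g 10) (by simp [relList])
    rw [Submodule.Quotient.mk_add] at this
    exact eq_neg_of_add_eq_zero_right this
  constructor
  · intro q hq
    fin_cases hq
    · rfl
    · rw [h7, h20]
    · rw [h13, h26, h7, h20]
    · rw [h19, h32, h13, h26, h7, h20]
    · rw [h25, h20]
    · rw [h31, h26, h7, h20]
    · rw [h20]
    · rw [h26, h7, h20]
    · rw [h32, h13, h26, h7, h20]
    · rw [h0, h31, h26, h7, h20]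
    · rw [h12, h7, h20]
    · rw [h24, h19, h32, h13, h26, h7, h20]
    · rw [h11, h0, h31, h26, h7, h20]
    · rw [h29, h12, h7, h20]
    · rw [h17, h0, h31, h26, h7, h20]
  · intro q hq
    fin_cases hq
    · rw [h3, h25, h20]
    · exact h15
    · exact h6


end K33LinkingModule
end

section
/- The quotient module L(K_{3,3}) = Z(K_{3,3})/B(K_{3,3}) is a free ℤ-module of rank one generated by the class [g1] of E^{c1,c3}; in particular there is a ℤ-module isomorphism L(K_{3,3}) ≅ ℤ sending [g1] to 1. -/
namespace K33LinkingModule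

def s : Fin 18 → ℤ := ![1,1,1,1,1,1,1,1,1,1,-1,1,-1,-1,1,1,1,1]

def φ : (Fin 18 → ℤ) →ₗ[ℤ] ℤ where
  toFun x := ∑ i, s i * x i
  map_add' x y := by simp [mul_add, Finset.sum_add_distrib]
  map_smul' c x := by simp [Finset.mul_sum]; ring_nf; simp [mul_comm, mul_left_comm]

lemma φ_g (q : Fin 18) : φ (g q) = s q := by
  simp [φ, g, Pi.single_apply, mul_ite]

lemma hker : B ≤ LinearMap.ker φ := by
  rw [B, Submodule.span_le]
  intro x hx
  simp only [Set.mem_setOf_eq] at hx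
  fin_cases hx <;>
    simp only [SetLike.mem_coe, LinearMap.mem_ker, map_sub, map_add, map_neg, φ_g] <;> decide

-- quotient class equalities
local notation "mk" => (Submodule.Quotient.mk : (Fin 18 → ℤ) → L)

lemma mk_eq (a b : Fin 18) (h : g a - g b ∈ relList) : mk (g a) = mk (g b) :=
  (Submodule.Quotient.eq B).mpr (Submodule.subset_span h)

lemma mk_eq_neg (a b : Fin 18) (h : g a + g b ∈ relList) : mk (g a) = - mk (g b) := by
  rw [← Submodule.Quotient.mk_neg, Submodule.Quotient.eq, sub_neg_eq_add]
  exact Submodule.subset_span h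

lemma mk_eq_neg' (a b : Fin 18) (h : -g a - g b ∈ relList) : mk (g a) = - mk (g b) := by
  rw [← Submodule.Quotient.mk_neg, Submodule.Quotient.eq, sub_neg_eq_add]
  exact B.neg_mem_iff.mp (by
    have : -(g a + g b) = -g a - g b := by ring
    rw [this]; exact Submodule.subset_span h)

lemma key (q : Fin 18) : mk (g q) = s q • mk (g 0) := by
  have h8 : mk (g 8) = mk (g 0) := (mk_eq 0 8 (by simp [relList])).symm
  have h5 : mk (g 5) = mk (g 0) := (mk_eq 8 5 (by simp [relList])).symm.trans h8
  have h9 : mk (g 9) = mk (g 0) := (mk_eq 9 5 (by simp [relList])).trans h5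
  have h6 : mk (g 6) = mk (g 0) := mk_eq 6 0 (by simp [relList])
  have h3 : mk (g 3) = mk (g 0) := (mk_eq 6 3 (by simp [relList])).symm.trans h6
  have h1 : mk (g 1) = mk (g 0) := (mk_eq 1 6 (by simp [relList])).trans h6
  have h13 : mk (g 13) = - mk (g 0) := mk_eq_neg' 13 0 (by simp [relList])
  have h12 : mk (g 12) = - mk (g 0) := by
    have := mk_eq_neg 0 12 (by simp [relList] : g 0 + g 12 ∈ relList)
    rw [this]; simp
  have h7 : mk (g 7) = mk (g 0) := (mk_eq 7 1 (by simp [relList])).trans h1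
  have h2 : mk (g 2) = mk (g 0) := (mk_eq 2 7 (by simp [relList])).trans h7
  have h11 : mk (g 11) = mk (g 0) := (mk_eq 11 1 (by simp [relList])).trans h1
  have h4 : mk (g 4) = mk (g 0) := (mk_eq 4 6 (by simp [relList])).trans h6
  have h14 : mk (g 14) = mk (g 0) := (mk_eq 14 3 (by simp [relList])).trans h3
  have h15 : mk (g 15) = mk (g 0) := (mk_eq 15 14 (by simp [relList])).trans h14
  have h17 : mk (g 17) = mk (g 0) := (mk_eq 17 9 (by simp [relList])).trans h9
  have h16 : mk (g 16) = mk (g 0) := (mk_eq 16 11 (by simp [relList])).trans h11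
  have h10 : mk (g 10) = - mk (g 0) := by
    have := mk_eq_neg' 10 2 (by simp [relList] : -g 10 - g 2 ∈ relList)
    rw [this, h2]
  fin_cases q <;>
    [ (rw [show s _ = (1:ℤ) from by decide, one_smul]; rfl);
      (rw [show s _ = (1:ℤ) from by decide, one_smul]; exact h1);
      (rw [show s _ = (1:ℤ) from by decide, one_smul]; exact h2);
      (rw [show s _ = (1:ℤ) from by decide, one_smul]; exact h3);
      (rw [show s _ = (1:ℤ) from by decide, one_smul]; exact h4);
      (rw [show s _ = (1:ℤ) from by decide, one_smul]; exact h5);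
      (rw [show s _ = (1:ℤ) from by decide, one_smul]; exact h6);
      (rw [show s _ = (1:ℤ) from by decide, one_smul]; exact h7);
      (rw [show s _ = (1:ℤ) from by decide, one_smul]; exact h8);
      (rw [show s _ = (1:ℤ) from by decide, one_smul]; exact h9);
      (rw [show s _ = (-1:ℤ) from by decide, neg_smul, one_smul]; exact h10);
      (rw [show s _ = (1:ℤ) from by decide, one_smul]; exact h11);
      (rw [show s _ = (-1:ℤ) from by decide, neg_smul, one_smul]; exact h12);
      (rw [show s _ = (-1:ℤ) from by decide, neg_smul, one_smul]; exact h13);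
      (rw [show s _ = (1:ℤ) from by decide, one_smul]; exact h14);
      (rw [show s _ = (1:ℤ) from by decide, one_smul]; exact h15);
      (rw [show s _ = (1:ℤ) from by decide, one_smul]; exact h16);
      (rw [show s _ = (1:ℤ) from by decide, one_smul]; exact h17)]


/-- The linking module `L(K_{3,3}) = Z(K_{3,3}) / B(K_{3,3})` is a free ℤ-module of
rank one generated by the class `[g₁]` of `E^{c₁,c₃}`: there is a ℤ-module
isomorphism `L(K_{3,3}) ≃ ℤ` sending `[g₁]` to `1`. -/
theorem linking_module_iso_int :
    ∃ e : L ≃ₗ[ℤ] ℤ, e (Submodule.Quotient.mk (g 0)) = 1 := by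
  let φq : L →ₗ[ℤ] ℤ := B.liftQ φ hker
  let ψ : ℤ →ₗ[ℤ] L := LinearMap.toSpanSingleton ℤ L (mk (g 0))
  have h1 : φq ∘ₗ ψ = LinearMap.id := by
    apply LinearMap.ext_ring
    simp [φq, ψ, LinearMap.toSpanSingleton, Submodule.liftQ_apply, φ_g, s]
  have h2 : ψ ∘ₗ φq = LinearMap.id := by
    apply Submodule.linearMap_qext
    apply Module.Basis.ext (Pi.basisFun ℤ (Fin 18))
    intro q
    have hb : (Pi.basisFun ℤ (Fin 18)) q = g q := by
      simp [Pi.basisFun_apply, g]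
    rw [hb]
    simp only [LinearMap.comp_apply, Submodule.mkQ_apply, Submodule.liftQ_apply,
      LinearMap.id_apply, φq, ψ, φ_g, LinearMap.toSpanSingleton_apply]
    exact (key q).symm
  refine ⟨LinearEquiv.ofLinear φq ψ h1 h2, ?_⟩
  simp [φq, Submodule.liftQ_apply, φ_g, s]


end K33LinkingModule
end
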